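/- In every execution of the online collaborative caching algorithm on a request sequence v_1, …, v_n (n ≥ 1), the total cost paid by the algorithm (caching cost plus UA cost) satisfies Σ_{w∈W, w≠r} f_w + Σ_{j=1}^n d(W_{v_j}, v_j) ≤ (4·log₂(n+1) + 2) · C*, where W is the final cache set, W_{v_j} is the cache set at the time request v_j is assigned, and C* := min over nonempty finite sets W* ⊆ X containing r of [ Σ_{w∈W*, w≠r} f_w + Σ_{j=1}^n d(W*, v_j) ] is the cost of the optimal offline solution. In other words, the online algorithm is (4·log₂(n+1)+2)-competitive. -/

import Mathlib

open Finset

/-- The setting of the online collaborative caching problem: a finite set `X` of nodes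
(base stations together with the root `r` representing the Internet), a pseudometric
UA-cost `d` satisfying the triangle inequality, and nonnegative caching costs `f`
with `f r = 0` (the root always holds the content). -/
structure CachingSetting (X : Type*) [Fintype X] where
  d : X → X → ℝ
  f : X → ℝ
  r : X
  d_nonneg : ∀ x y, 0 ≤ d x y
  d_self : ∀ x, d x x = 0
  d_symm : ∀ x y, d x y = d y x
  d_triangle : ∀ x y z, d x z ≤ d x y + d y z
  f_nonneg : ∀ k, 0 ≤ f k
  f_root : f r = 0

namespace CachingSetting

variable {X : Type*} [Fintype X] [DecidableEq X] (S : CachingSetting X)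

/-- UA cost of serving a request at `v` from the nearest node of the cache set `W`:
`D W v = min_{k ∈ W} d k v`. -/
noncomputable def D (W : Finset X) (v : X) : ℝ :=
  if h : W.Nonempty then W.inf' h (fun k => S.d k v) else 0

/-- Potential of node `k` with respect to the cache set `W` and the first `j`
requests of the request sequence `v`:
`pot v W j k = ∑_{i < j} max(D W (v i) − d k (v i), 0)`. -/
noncomputable def pot (v : ℕ → X) (W : Finset X) (j : ℕ) (k : X) : ℝ :=
  ∑ i ∈ Finset.range j, max (S.D W (v i) - S.d k (v i)) 0

/-- One step of the online algorithm on request `v i`, turning the cache set `W`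
into `W'`.  After updating the potentials (they become the potentials with respect
to `W` and the first `i + 1` requests), either all potentials are at most the caching
costs and no new cache is opened, or the content is cached at a maximizer `w` of
`p(k) − f k` with `p(w) − f w > 0`. -/
def Step (v : ℕ → X) (i : ℕ) (W W' : Finset X) : Prop :=
  ((∀ k, S.pot v W (i + 1) k ≤ S.f k) ∧ W' = W) ∨
    (∃ w, (∀ k, S.pot v W (i + 1) k - S.f k ≤ S.pot v W (i + 1) w - S.f w) ∧
      S.f w < S.pot v W (i + 1) w ∧ W' = insert w W)

/-- `IsExecution S n v Ws` says that `Ws j` is the cache set maintained by the online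
algorithm after fully processing the first `j` of the `n` requests `v 0, v 1, …`
(initially the cache set is `{r}`); ties may be broken arbitrarily. -/
def IsExecution (n : ℕ) (v : ℕ → X) (Ws : ℕ → Finset X) : Prop :=
  Ws 0 = {S.r} ∧ ∀ i < n, S.Step v i (Ws i) (Ws (i + 1))

end CachingSetting

set_option linter.unusedSectionVars false
set_option linter.unusedVariables false

namespace CachingSetting

variable {X : Type*} [Fintype X] [DecidableEq X] (S : CachingSetting X)

lemma D_le_of_mem {W : Finset X} {k : X} (hk : k ∈ W) (x : X) : S.D W x ≤ S.d k x := by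
  unfold D
  rw [dif_pos ⟨k, hk⟩]
  exact Finset.inf'_le _ hk

lemma D_nonneg {W : Finset X} (x : X) : 0 ≤ S.D W x := by
  unfold D
  split
  · exact Finset.le_inf' _ _ fun k _ => S.d_nonneg k x
  · exact le_refl 0

lemma exists_D_eq {W : Finset X} (h : W.Nonempty) (x : X) :
    ∃ k ∈ W, S.D W x = S.d k x := by
  unfold D
  rw [dif_pos h]
  exact Finset.exists_mem_eq_inf' h _

lemma D_anti {W W' : Finset X} (h : W ⊆ W') (hW : W.Nonempty) (x : X) :
    S.D W' x ≤ S.D W x := by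
  obtain ⟨k, hk, hkeq⟩ := S.exists_D_eq hW x
  rw [hkeq]
  exact S.D_le_of_mem (h hk) x

lemma D_insert {W : Finset X} (hW : W.Nonempty) (w : X) (x : X) :
    S.D (insert w W) x = min (S.d w x) (S.D W x) := by
  unfold D
  rw [dif_pos ⟨w, Finset.mem_insert_self w W⟩, dif_pos hW]
  exact Finset.inf'_insert (H := hW) (f := fun k => S.d k x)

lemma D_le_D_add_d {W : Finset X} (hW : W.Nonempty) (c x : X) :
    S.D W x ≤ S.D W c + S.d c x := by
  obtain ⟨k, hk, hkeq⟩ := S.exists_D_eq hW c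
  calc S.D W x ≤ S.d k x := S.D_le_of_mem hk x
    _ ≤ S.d k c + S.d c x := S.d_triangle k c x
    _ = S.D W c + S.d c x := by rw [hkeq]

lemma pot_zero (v : ℕ → X) (W : Finset X) (k : X) : S.pot v W 0 k = 0 := by
  simp [pot]

lemma pot_succ (v : ℕ → X) (W : Finset X) (j : ℕ) (k : X) :
    S.pot v W (j + 1) k = S.pot v W j k + max (S.D W (v j) - S.d k (v j)) 0 := by
  simp [pot, Finset.sum_range_succ]

lemma pot_nonneg (v : ℕ → X) (W : Finset X) (j : ℕ) (k : X) : 0 ≤ S.pot v W j k :=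
  Finset.sum_nonneg fun i _ => le_max_right _ _

lemma pot_anti (v : ℕ → X) {W W' : Finset X} (h : W ⊆ W') (hW : W.Nonempty)
    (j : ℕ) (k : X) : S.pot v W' j k ≤ S.pot v W j k := by
  refine Finset.sum_le_sum fun i _ => ?_
  have := S.D_anti h hW (v i)
  exact max_le_max (by linarith) le_rfl

lemma pot_eq_zero_of_mem (v : ℕ → X) {W : Finset X} {k : X} (hk : k ∈ W) (j : ℕ) :
    S.pot v W j k = 0 := by
  refine Finset.sum_eq_zero fun i _ => ?_
  have := S.D_le_of_mem hk (v i)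
  simp [max_eq_right, sub_nonpos.2 this]

lemma term_le_pot (v : ℕ → X) (W : Finset X) {i j : ℕ} (hij : i < j) (k : X) :
    max (S.D W (v i) - S.d k (v i)) 0 ≤ S.pot v W j k :=
  Finset.single_le_sum (f := fun i => max (S.D W (v i) - S.d k (v i)) 0)
    (fun i _ => le_max_right _ _) (Finset.mem_range.2 hij)

end CachingSetting
namespace CachingSetting

variable {X : Type*} [Fintype X] [DecidableEq X] (S : CachingSetting X)
variable {n : ℕ} {v : ℕ → X} {Ws : ℕ → Finset X}

lemma max_sub_eq_sub_min (x y : ℝ) : max (x - y) 0 = x - min y x := by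
  rcases le_total y x with h | h
  · rw [max_eq_left (by linarith), min_eq_left h]
  · rw [max_eq_right (by linarith), min_eq_right h]
    ring

lemma r_mem_Ws (hexec : S.IsExecution n v Ws) : ∀ i, i ≤ n → S.r ∈ Ws i := by
  intro i
  induction i with
  | zero => intro _; rw [hexec.1]; exact Finset.mem_singleton_self _
  | succ i ih =>
    intro hi
    rcases hexec.2 i (by omega) with ⟨_, hW⟩ | ⟨w, _, _, hW⟩
    · rw [hW]; exact ih (by omega)
    · rw [hW]; exact Finset.mem_insert_of_mem (ih (by omega))

lemma Ws_nonempty (hexec : S.IsExecution n v Ws) {i : ℕ} (hi : i ≤ n) :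
    (Ws i).Nonempty := ⟨S.r, S.r_mem_Ws hexec i hi⟩

lemma Ws_subset_succ (hexec : S.IsExecution n v Ws) {i : ℕ} (hi : i < n) :
    Ws i ⊆ Ws (i + 1) := by
  rcases hexec.2 i hi with ⟨_, hW⟩ | ⟨w, _, _, hW⟩
  · rw [hW]
  · rw [hW]; exact Finset.subset_insert _ _

lemma invariant (hexec : S.IsExecution n v Ws) :
    ∀ i, i ≤ n → ∀ k, S.pot v (Ws i) i k ≤ S.f k := by
  intro i
  induction i with
  | zero => intro _ k; rw [S.pot_zero]; exact S.f_nonneg k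
  | succ i ih =>
    intro hi k
    have hi' : i < n := by omega
    have hne : (Ws i).Nonempty := S.Ws_nonempty hexec (by omega)
    rcases hexec.2 i hi' with ⟨hall, hW⟩ | ⟨w, hmax, hlt, hW⟩
    · rw [hW]; exact hall k
    · rw [hW]
      have hsub : S.pot v (insert w (Ws i)) i k ≤ S.pot v (Ws i) i k :=
        S.pot_anti v (Finset.subset_insert _ _) hne i k
      rw [S.pot_succ]
      have hDins := S.D_insert hne w (v i)
      have hm := hmax k
      rw [S.pot_succ, S.pot_succ] at hm
      have hIHk := ih (by omega) k
      have hIHw := ih (by omega) w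
      set P := S.pot v (Ws i) i k with hP
      set Pw := S.pot v (Ws i) i w with hPw
      set Dv := S.D (Ws i) (v i) with hDv
      set aw := S.d w (v i) with haw
      set ak := S.d k (v i) with hak
      rw [hDins]
      by_cases h : ak < min aw Dv
      · have hminD : min aw Dv ≤ Dv := min_le_right _ _
        have hminw : min aw Dv ≤ aw := min_le_left _ _
        have h1 : max (min aw Dv - ak) 0 = min aw Dv - ak :=
          max_eq_left (by linarith)
        have h2 : max (Dv - ak) 0 = Dv - ak := max_eq_left (by linarith)
        rw [h1]
        rw [h2] at hm
        rcases le_total aw Dv with hcase | hcase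
        · have h3 : min aw Dv = aw := min_eq_left hcase
          have h4 : max (Dv - aw) 0 = Dv - aw := max_eq_left (by linarith)
          rw [h4] at hm
          rw [h3]
          linarith
        · have h3 : min aw Dv = Dv := min_eq_right hcase
          have h4 : max (Dv - aw) 0 = 0 := max_eq_right (by linarith)
          rw [h4] at hm
          rw [h3]
          linarith
      · push_neg at h
        have h1 : max (min aw Dv - ak) 0 = 0 := max_eq_right (by linarith)
        rw [h1]
        linarith

lemma keybound (hexec : S.IsExecution n v Ws) {i : ℕ} (hi : i < n) (k : X) :
    S.pot v (Ws i) (i + 1) k ≤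
      S.f k + (S.D (Ws i) (v i) - S.D (Ws (i + 1)) (v i)) := by
  have hne : (Ws i).Nonempty := S.Ws_nonempty hexec (by omega)
  rcases hexec.2 i hi with ⟨hall, hW⟩ | ⟨w, hmax, hlt, hW⟩
  · have := hall k
    rw [hW]
    linarith
  · have hm := hmax k
    have hw : S.pot v (Ws i) i w ≤ S.f w := S.invariant hexec i (by omega) w
    have hsucc : S.pot v (Ws i) (i + 1) w
        = S.pot v (Ws i) i w + max (S.D (Ws i) (v i) - S.d w (v i)) 0 :=
      S.pot_succ v (Ws i) i w
    have hid : max (S.D (Ws i) (v i) - S.d w (v i)) 0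
        = S.D (Ws i) (v i) - S.D (Ws (i + 1)) (v i) := by
      rw [hW, S.D_insert hne w (v i), max_sub_eq_sub_min]
    linarith

lemma a_le_D (hexec : S.IsExecution n v Ws) {i : ℕ} (hi : i < n) :
    S.D (Ws (i + 1)) (v i) ≤ S.D (Ws i) (v i) :=
  S.D_anti (S.Ws_subset_succ hexec hi) (S.Ws_nonempty hexec (by omega)) (v i)

lemma sigma_lemma (hexec : S.IsExecution n v Ws) {i : ℕ} (hi : i < n) (k : X) :
    S.D (Ws (i + 1)) (v i) ≤ S.f k + S.d k (v i) := by
  have h := S.keybound hexec hi k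
  have ht : max (S.D (Ws i) (v i) - S.d k (v i)) 0 ≤ S.pot v (Ws i) (i + 1) k :=
    S.term_le_pot v (Ws i) (Nat.lt_succ_self i) k
  have ht2 : S.D (Ws i) (v i) - S.d k (v i)
      ≤ max (S.D (Ws i) (v i) - S.d k (v i)) 0 := le_max_left _ _
  linarith

end CachingSetting
namespace CachingSetting

variable {X : Type*} [Fintype X] [DecidableEq X] (S : CachingSetting X)
variable {n : ℕ} {v : ℕ → X} {Ws : ℕ → Finset X}

lemma opened_not_mem (hexec : S.IsExecution n v Ws) {i : ℕ} (hi : i < n) {w : X}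
    (hlt : S.f w < S.pot v (Ws i) (i + 1) w) : w ∉ Ws i := by
  intro hmem
  rw [S.pot_eq_zero_of_mem v hmem] at hlt
  exact absurd hlt (not_lt.2 (S.f_nonneg w))

lemma prior_eq (hexec : S.IsExecution n v Ws) {i : ℕ} (hi : i < n) {w : X}
    (hW : Ws (i + 1) = insert w (Ws i)) :
    S.pot v (Ws i) i w
      = ∑ s ∈ Finset.range i, (S.D (Ws i) (v s) - S.D (Ws (i + 1)) (v s)) := by
  have hne : (Ws i).Nonempty := S.Ws_nonempty hexec (by omega)
  refine Finset.sum_congr rfl fun s _ => ?_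
  rw [hW, S.D_insert hne w (v s), max_sub_eq_sub_min]

lemma Fstep_bound1 (hexec : S.IsExecution n v Ws) {i : ℕ} (hi : i < n) :
    (∑ w ∈ (Ws (i + 1)).erase S.r, S.f w) - (∑ w ∈ (Ws i).erase S.r, S.f w) ≤
      (∑ s ∈ Finset.range i, (S.D (Ws i) (v s) - S.D (Ws (i + 1)) (v s)))
        + (S.D (Ws i) (v i) - S.D (Ws (i + 1)) (v i)) := by
  have hne : (Ws i).Nonempty := S.Ws_nonempty hexec (by omega)
  have hTnn : 0 ≤ ∑ s ∈ Finset.range i, (S.D (Ws i) (v s) - S.D (Ws (i + 1)) (v s)) :=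
    Finset.sum_nonneg fun s _ => by
      have := S.D_anti (S.Ws_subset_succ hexec hi) hne (v s); linarith
  have hδ : 0 ≤ S.D (Ws i) (v i) - S.D (Ws (i + 1)) (v i) := by
    have := S.a_le_D hexec hi; linarith
  rcases hexec.2 i hi with ⟨hall, hW⟩ | ⟨w, hmax, hlt, hW⟩
  · simp [hW, sub_self]
  · have hnm : w ∉ Ws i := S.opened_not_mem hexec hi hlt
    have hwr : w ≠ S.r := fun h => hnm (h ▸ S.r_mem_Ws hexec i (by omega))
    have hsum : ∑ x ∈ (Ws (i + 1)).erase S.r, S.f x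
        = S.f w + ∑ x ∈ (Ws i).erase S.r, S.f x := by
      rw [hW, Finset.erase_insert_of_ne hwr,
        Finset.sum_insert (fun h => hnm (Finset.mem_of_mem_erase h))]
    have hprior := S.prior_eq hexec hi hW
    have hsucc := S.pot_succ v (Ws i) i w
    have hid : max (S.D (Ws i) (v i) - S.d w (v i)) 0
        = S.D (Ws i) (v i) - S.D (Ws (i + 1)) (v i) := by
      rw [hW, S.D_insert hne w (v i), max_sub_eq_sub_min]
    rw [hsum]
    linarith
lemma Fstep_bound2 (hexec : S.IsExecution n v Ws) {i : ℕ} (hi : i < n) (k : X) :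
    (∑ w ∈ (Ws (i + 1)).erase S.r, S.f w) - (∑ w ∈ (Ws i).erase S.r, S.f w) ≤
      (∑ s ∈ Finset.range i, (S.D (Ws i) (v s) - S.D (Ws (i + 1)) (v s)))
        + S.f k + S.d k (v i) := by
  have hne : (Ws i).Nonempty := S.Ws_nonempty hexec (by omega)
  rcases hexec.2 i hi with ⟨hall, hW⟩ | ⟨w, hmax, hlt, hW⟩
  · have h1 : (∑ w ∈ (Ws (i + 1)).erase S.r, S.f w) - (∑ w ∈ (Ws i).erase S.r, S.f w) = 0 := by
      rw [hW]; ring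
    have hTnn : 0 ≤ ∑ s ∈ Finset.range i, (S.D (Ws i) (v s) - S.D (Ws (i + 1)) (v s)) :=
      Finset.sum_nonneg fun s _ => by
        have := S.D_anti (S.Ws_subset_succ hexec hi) hne (v s); linarith
    have := S.f_nonneg k
    have := S.d_nonneg k (v i)
    linarith
  · have hnm : w ∉ Ws i := S.opened_not_mem hexec hi hlt
    have hwr : w ≠ S.r := fun h => hnm (h ▸ S.r_mem_Ws hexec i (by omega))
    have hsum : ∑ x ∈ (Ws (i + 1)).erase S.r, S.f x
        = S.f w + ∑ x ∈ (Ws i).erase S.r, S.f x := by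
      rw [hW, Finset.erase_insert_of_ne hwr,
        Finset.sum_insert (fun h => hnm (Finset.mem_of_mem_erase h))]
    have hprior := S.prior_eq hexec hi hW
    have hsuccw := S.pot_succ v (Ws i) i w
    have hid : max (S.D (Ws i) (v i) - S.d w (v i)) 0
        = S.D (Ws i) (v i) - S.D (Ws (i + 1)) (v i) := by
      rw [hW, S.D_insert hne w (v i), max_sub_eq_sub_min]
    have hm := hmax k
    have htermk : S.D (Ws i) (v i) - S.d k (v i) ≤ S.pot v (Ws i) (i + 1) k :=
      le_trans (le_max_left _ _) (S.term_le_pot v (Ws i) (Nat.lt_succ_self i) k)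
    have hann : 0 ≤ S.D (Ws (i + 1)) (v i) := S.D_nonneg (v i)
    rw [hsum]
    linarith

lemma Tsum_le (hexec : S.IsExecution n v Ws) :
    ∀ m, m ≤ n →
      (∑ i ∈ Finset.range m,
        ∑ s ∈ Finset.range i, (S.D (Ws i) (v s) - S.D (Ws (i + 1)) (v s)))
      = ∑ s ∈ Finset.range m, (S.D (Ws (s + 1)) (v s) - S.D (Ws m) (v s)) := by
  intro m
  induction m with
  | zero => intro _; simp
  | succ m ih =>
    intro hm
    rw [Finset.sum_range_succ, ih (by omega), Finset.sum_range_succ (n := m), sub_self,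
      add_zero, ← Finset.sum_add_distrib]
    exact Finset.sum_congr rfl fun s _ => by ring

lemma F_teles (hexec : S.IsExecution n v Ws) :
    (∑ w ∈ (Ws n).erase S.r, S.f w)
      = ∑ i ∈ Finset.range n,
          ((∑ w ∈ (Ws (i + 1)).erase S.r, S.f w) - (∑ w ∈ (Ws i).erase S.r, S.f w)) := by
  rw [Finset.sum_range_sub (f := fun i => ∑ w ∈ (Ws i).erase S.r, S.f w)]
  rw [hexec.1]
  simp
lemma sum_rank_eq :
    ∀ (m : ℕ) (T : Finset ℕ), T.card = m → ∀ (g : ℕ → ℝ),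
      ∑ s ∈ T, g ((T.filter (fun s' => s' ≤ s)).card)
        = ∑ j ∈ Finset.range m, g (j + 1) := by
  intro m
  induction m with
  | zero =>
    intro T hT g
    rw [Finset.card_eq_zero.1 hT]
    simp
  | succ m ih =>
    intro T hT g
    have hne : T.Nonempty := Finset.card_pos.1 (by omega)
    set M := T.max' hne with hMdef
    have hM : M ∈ T := T.max'_mem hne
    have key1 : T.filter (fun s' => s' ≤ M) = T :=
      Finset.filter_true_of_mem fun x hx => T.le_max' x hx
    have hT' : (T.erase M).card = m := by
      rw [Finset.card_erase_of_mem hM]; omega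
    have key2 : ∀ s ∈ T.erase M,
        (T.filter (fun s' => s' ≤ s)).card
          = ((T.erase M).filter (fun s' => s' ≤ s)).card := by
      intro s hs
      congr 1
      ext x
      simp only [Finset.mem_filter, Finset.mem_erase]
      constructor
      · rintro ⟨hx, hxs⟩
        refine ⟨⟨?_, hx⟩, hxs⟩
        rintro rfl
        have hsT := Finset.mem_of_mem_erase hs
        have h1 := T.le_max' s hsT
        have h2 := (Finset.mem_erase.1 hs).1
        omega
      · rintro ⟨⟨_, hx⟩, hxs⟩; exact ⟨hx, hxs⟩
    rw [← Finset.sum_erase_add T _ hM, key1, hT]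
    have hcongr : ∑ x ∈ T.erase M, g ((T.filter (fun s' => s' ≤ x)).card)
        = ∑ x ∈ T.erase M, g (((T.erase M).filter (fun s' => s' ≤ x)).card) :=
      Finset.sum_congr rfl fun s hs => by rw [key2 s hs]
    rw [hcongr, ih (T.erase M) hT' g, Finset.sum_range_succ]

lemma harm_le_logb : ∀ m : ℕ,
    ∑ j ∈ Finset.range m, (1 : ℝ) / (j + 1) ≤ Real.logb 2 (m + 1) := by
  intro m
  induction m with
  | zero => simp
  | succ m ih =>
    rw [Finset.sum_range_succ]
    have hm1 : (0:ℝ) < (m : ℝ) + 1 := by positivity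
    have hinv : (0:ℝ) ≤ 1 / ((m:ℝ) + 1) := by positivity
    have hb : (2:ℝ) ≤ (1 + 1 / ((m:ℝ) + 1)) ^ (m + 1) := by
      have hber := one_add_mul_le_pow (a := 1 / ((m:ℝ) + 1)) (by linarith) (m + 1)
      have heq : 1 + ((m:ℕ) + 1 : ℕ) * (1 / ((m:ℝ) + 1)) = 2 := by
        push_cast
        field_simp
        ring
      rw [heq] at hber
      exact hber
    have hlog1 : (1:ℝ) ≤ Real.logb 2 ((1 + 1 / ((m:ℝ) + 1)) ^ (m + 1)) := by
      calc (1:ℝ) = Real.logb 2 2 := (Real.logb_self_eq_one (by norm_num)).symm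
        _ ≤ _ := Real.logb_le_logb_of_le (by norm_num) (by norm_num) hb
    rw [Real.logb_pow] at hlog1
    push_cast at hlog1
    have hstep : 1 / ((m:ℝ) + 1) ≤ Real.logb 2 (1 + 1 / ((m:ℝ) + 1)) := by
      rw [div_le_iff₀ hm1]
      nlinarith [hlog1]
    have hyeq : 1 + 1 / ((m:ℝ) + 1) = ((m:ℝ) + 2) / ((m:ℝ) + 1) := by
      field_simp
      ring
    have hlogdiv : Real.logb 2 (1 + 1 / ((m:ℝ) + 1))
        = Real.logb 2 ((m:ℝ) + 2) - Real.logb 2 ((m:ℝ) + 1) := by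
      rw [hyeq, Real.logb_div (by positivity) (by positivity)]
    rw [hlogdiv] at hstep
    push_cast
    rw [show ((m:ℝ) + 1 + 1) = (m:ℝ) + 2 by ring]
    linarith
end CachingSetting

/-- Theorem 2 of the paper: the online algorithm is `(4 log₂(n+1) + 2)`-competitive.
In every execution on requests `v 0, …, v (n-1)` (`n ≥ 1`), the total cost paid by
the algorithm — the caching cost of the final cache set `Ws n` plus the UA cost
`∑_j d(W_{v_j}, v_j)`, where `W_{v_j} = Ws (j+1)` is the cache set when `v j` is
assigned — is at most `(4 log₂(n+1) + 2) · C*`, where `C*` is the minimum offline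
cost over all cache sets `W*` containing the root `r`. -/
theorem caching_competitive_ratio {X : Type*} [Fintype X] [DecidableEq X]
    (S : CachingSetting X) (n : ℕ) (hn : 1 ≤ n) (v : ℕ → X) (Ws : ℕ → Finset X)
    (hexec : S.IsExecution n v Ws) :
    ∑ w ∈ (Ws n).erase S.r, S.f w + ∑ j ∈ Finset.range n, S.D (Ws (j + 1)) (v j) ≤
      (4 * Real.logb 2 ((n : ℝ) + 1) + 2) *
        ((Finset.univ.powerset.filter fun Wstar : Finset X => S.r ∈ Wstar).inf'
          ⟨{S.r}, by simp⟩
          fun Wstar =>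
            ∑ w ∈ Wstar.erase S.r, S.f w + ∑ j ∈ Finset.range n, S.D Wstar (v j)) := by
  classical
  obtain ⟨Wstar, hWmem, hWeq⟩ :=
    Finset.exists_mem_eq_inf'
      (H := (⟨{S.r}, by simp⟩ :
        (Finset.univ.powerset.filter fun W' : Finset X => S.r ∈ W').Nonempty))
      (fun Wstar => ∑ w ∈ Wstar.erase S.r, S.f w + ∑ j ∈ Finset.range n, S.D Wstar (v j))
  rw [hWeq]
  have hr : S.r ∈ Wstar := (Finset.mem_filter.1 hWmem).2
  have hWne : Wstar.Nonempty := ⟨S.r, hr⟩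
  choose c hcmem hceq using fun s : ℕ => S.exists_D_eq hWne (v s)
  set L := Real.logb 2 ((n : ℝ) + 1) with hL
  have hL1 : (1 : ℝ) ≤ L := by
    rw [hL]
    calc (1 : ℝ) = Real.logb 2 2 := (Real.logb_self_eq_one (by norm_num)).symm
      _ ≤ _ := by
        apply Real.logb_le_logb_of_le (by norm_num) (by norm_num)
        have : (1 : ℝ) ≤ (n : ℝ) := by exact_mod_cast hn
        linarith
  set T : X → Finset ℕ := fun cc => (Finset.range n).filter (fun s' => c s' = cc) with hT
  set Ac : X → ℝ := fun cc => ∑ s' ∈ T cc, S.D Wstar (v s') with hAc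
  set B : X → ℝ := fun cc => S.f cc + 2 * Ac cc with hB
  set rk : ℕ → ℕ := fun s => ((T (c s)).filter (fun s' => s' ≤ s)).card with hrk
  set g : X → ℕ → ℝ := fun cc j => if j = 1 then 3 * S.f cc else 2 * B cc / (j : ℝ) with hg
  have hdnn : ∀ s, 0 ≤ S.D Wstar (v s) := fun s => S.D_nonneg (v s)
  have hAcnn : ∀ cc, 0 ≤ Ac cc := fun cc => Finset.sum_nonneg fun s _ => hdnn s
  have hrk1 : ∀ s, s < n → 1 ≤ rk s := by
    intro s hs
    have hmem : s ∈ (T (c s)).filter (fun s' => s' ≤ s) := by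
      rw [hT]
      exact Finset.mem_filter.2 ⟨Finset.mem_filter.2 ⟨Finset.mem_range.2 hs, rfl⟩, le_rfl⟩
    exact Finset.card_pos.2 ⟨s, hmem⟩
  -- the master per-request inequality
  have master : ∀ s, s < n →
      2 * S.D (Ws (s + 1)) (v s)
        + (if rk s = 1 then S.f (c s) + S.D Wstar (v s)
            else S.D (Ws s) (v s) - S.D (Ws (s + 1)) (v s))
      ≤ g (c s) (rk s) + 3 * S.D Wstar (v s) := by
    intro s hs
    have hsig := S.sigma_lemma hexec hs (c s)
    have haD := S.a_le_D hexec hs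
    have hdstar : S.d (c s) (v s) = S.D Wstar (v s) := (hceq s).symm
    rw [hdstar] at hsig
    by_cases h1 : rk s = 1
    · have hgval : g (c s) (rk s) = 3 * S.f (c s) := by
        rw [hg]; simp [h1]
      rw [if_pos h1, hgval]
      linarith [hdnn s]
    · rw [if_neg h1]
      have hj2 : 2 ≤ rk s := by have := hrk1 s hs; omega
      have hWsne : (Ws s).Nonempty := S.Ws_nonempty hexec (le_of_lt hs)
      -- cluster count bound
      have hkey : (rk s : ℝ) * (S.D (Ws s) (v s) - S.D Wstar (v s))
          ≤ B (c s) + (S.D (Ws s) (v s) - S.D (Ws (s + 1)) (v s)) := by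
        have hkb := S.keybound hexec hs (c s)
        have hsubset : ((T (c s)).filter (fun s' => s' ≤ s)) ⊆ Finset.range (s + 1) := by
          intro x hx
          simp only [hT, Finset.mem_filter, Finset.mem_range] at hx ⊢
          omega
        have hle : ∑ s' ∈ (T (c s)).filter (fun s' => s' ≤ s),
            max (S.D (Ws s) (v s') - S.d (c s) (v s')) 0 ≤ S.pot v (Ws s) (s + 1) (c s) :=
          Finset.sum_le_sum_of_subset_of_nonneg hsubset (fun i _ _ => le_max_right _ _)
        have hterm : ∀ s' ∈ (T (c s)).filter (fun s' => s' ≤ s),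
            (S.D (Ws s) (v s) - S.D Wstar (v s)) - 2 * S.D Wstar (v s')
              ≤ max (S.D (Ws s) (v s') - S.d (c s) (v s')) 0 := by
          intro s' hs'
          have hcs' : c s' = c s :=
            (Finset.mem_filter.1 (Finset.mem_filter.1 hs').1).2
          have hds' : S.d (c s) (v s') = S.D Wstar (v s') := by
            rw [← hcs']; exact (hceq s').symm
          have h1' : S.D (Ws s) (c s) ≤ S.D (Ws s) (v s') + S.D Wstar (v s') := by
            have h := S.D_le_D_add_d hWsne (v s') (c s)
            rw [S.d_symm, hds'] at h
            exact h
          have h2' : S.D (Ws s) (v s) ≤ S.D (Ws s) (c s) + S.D Wstar (v s) := by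
            have h := S.D_le_D_add_d hWsne (c s) (v s)
            rw [hdstar] at h
            exact h
          calc (S.D (Ws s) (v s) - S.D Wstar (v s)) - 2 * S.D Wstar (v s')
              ≤ S.D (Ws s) (v s') - S.d (c s) (v s') := by rw [hds']; linarith
            _ ≤ max (S.D (Ws s) (v s') - S.d (c s) (v s')) 0 := le_max_left _ _
        have hsum := Finset.sum_le_sum hterm
        rw [Finset.sum_sub_distrib, Finset.sum_const, nsmul_eq_mul, ← Finset.mul_sum] at hsum
        have hTle : ∑ s' ∈ (T (c s)).filter (fun s' => s' ≤ s), S.D Wstar (v s') ≤ Ac (c s) :=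
          Finset.sum_le_sum_of_subset_of_nonneg (Finset.filter_subset _ _)
            (fun i _ _ => hdnn i)
        have hcardeq : rk s = ((T (c s)).filter (fun s' => s' ≤ s)).card := rfl
        have hBeq : B (c s) = S.f (c s) + 2 * Ac (c s) := rfl
        rw [hcardeq, hBeq]
        linarith
      have hgval : g (c s) (rk s) = 2 * B (c s) / (rk s : ℝ) := by
        rw [hg]; simp [h1]
      rw [hgval]
      have hjR : (2 : ℝ) ≤ (rk s : ℝ) := by exact_mod_cast hj2
      have hj0 : (0 : ℝ) < (rk s : ℝ) := by linarith
      have hδ : 0 ≤ S.D (Ws s) (v s) - S.D (Ws (s + 1)) (v s) := by linarith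
      have hann : 0 ≤ S.D (Ws (s + 1)) (v s) := S.D_nonneg (v s)
      have key2 : (rk s : ℝ) *
          (2 * S.D (Ws (s + 1)) (v s) + (S.D (Ws s) (v s) - S.D (Ws (s + 1)) (v s)))
          ≤ (rk s : ℝ) * (2 * B (c s) / (rk s : ℝ) + 3 * S.D Wstar (v s)) := by
        have hid : (rk s : ℝ) * (2 * B (c s) / (rk s : ℝ) + 3 * S.D Wstar (v s))
            = 2 * B (c s) + (rk s : ℝ) * (3 * S.D Wstar (v s)) := by
          field_simp
        rw [hid]
        nlinarith [hkey, mul_nonneg (by linarith : (0 : ℝ) ≤ (rk s : ℝ) - 2) hδ,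
          mul_nonneg (by linarith : (0 : ℝ) ≤ (rk s : ℝ)) (hdnn s)]
      exact le_of_mul_le_mul_left key2 hj0
  -- total cost bound by the per-request quantities
  have hmain : (∑ w ∈ (Ws n).erase S.r, S.f w) + ∑ s ∈ Finset.range n, S.D (Ws (s + 1)) (v s)
      ≤ ∑ s ∈ Finset.range n, (g (c s) (rk s) + 3 * S.D Wstar (v s)) := by
    have hF : (∑ w ∈ (Ws n).erase S.r, S.f w)
        ≤ ∑ i ∈ Finset.range n,
            ((∑ s' ∈ Finset.range i, (S.D (Ws i) (v s') - S.D (Ws (i + 1)) (v s')))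
              + (if rk i = 1 then S.f (c i) + S.D Wstar (v i)
                  else S.D (Ws i) (v i) - S.D (Ws (i + 1)) (v i))) := by
      rw [S.F_teles hexec]
      refine Finset.sum_le_sum fun i hi => ?_
      have hi' : i < n := Finset.mem_range.1 hi
      by_cases h1 : rk i = 1
      · rw [if_pos h1]
        have := S.Fstep_bound2 hexec hi' (c i)
        have hd : S.d (c i) (v i) = S.D Wstar (v i) := (hceq i).symm
        rw [hd] at this
        linarith
      · rw [if_neg h1]
        exact S.Fstep_bound1 hexec hi'
    have hT2 : ∑ i ∈ Finset.range n,
          (∑ s' ∈ Finset.range i, (S.D (Ws i) (v s') - S.D (Ws (i + 1)) (v s')))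
        ≤ ∑ s ∈ Finset.range n, S.D (Ws (s + 1)) (v s) := by
      rw [S.Tsum_le hexec n le_rfl]
      refine Finset.sum_le_sum fun s _ => ?_
      have := S.D_nonneg (W := Ws n) (v s)
      linarith
    have hmaster' : ∑ s ∈ Finset.range n,
          (2 * S.D (Ws (s + 1)) (v s)
            + (if rk s = 1 then S.f (c s) + S.D Wstar (v s)
                else S.D (Ws s) (v s) - S.D (Ws (s + 1)) (v s)))
        ≤ ∑ s ∈ Finset.range n, (g (c s) (rk s) + 3 * S.D Wstar (v s)) :=
      Finset.sum_le_sum fun s hs => master s (Finset.mem_range.1 hs)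
    rw [Finset.sum_add_distrib] at hF
    have e1 : ∑ s ∈ Finset.range n,
          (2 * S.D (Ws (s + 1)) (v s)
            + (if rk s = 1 then S.f (c s) + S.D Wstar (v s)
                else S.D (Ws s) (v s) - S.D (Ws (s + 1)) (v s)))
        = 2 * (∑ s ∈ Finset.range n, S.D (Ws (s + 1)) (v s))
            + ∑ s ∈ Finset.range n,
              (if rk s = 1 then S.f (c s) + S.D Wstar (v s)
                else S.D (Ws s) (v s) - S.D (Ws (s + 1)) (v s)) := by
      rw [Finset.sum_add_distrib, Finset.mul_sum]
    linarith
  -- regroup by clusters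
  have hfiber : ∑ s ∈ Finset.range n, (g (c s) (rk s) + 3 * S.D Wstar (v s))
      = ∑ cc ∈ Wstar, ∑ s ∈ T cc, (g (c s) (rk s) + 3 * S.D Wstar (v s)) :=
    (Finset.sum_fiberwise_of_maps_to (fun s _ => hcmem s) _).symm
  have hcluster : ∀ cc ∈ Wstar,
      ∑ s ∈ T cc, (g (c s) (rk s) + 3 * S.D Wstar (v s))
        ≤ (4 * L + 2) * (S.f cc + Ac cc) := by
    intro cc hcc
    have hfnn := S.f_nonneg cc
    have hcoef : (0 : ℝ) ≤ 4 * L + 2 := by linarith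
    have hre : ∑ s ∈ T cc, (g (c s) (rk s) + 3 * S.D Wstar (v s))
        = (∑ s ∈ T cc, g cc ((T cc |>.filter (fun s' => s' ≤ s)).card)) + 3 * Ac cc := by
      rw [Finset.sum_add_distrib, ← Finset.mul_sum, hAc]
      congr 1
      refine Finset.sum_congr rfl fun s hs => ?_
      have hcs : c s = cc := (Finset.mem_filter.1 hs).2
      simp only [hrk, hcs]
    rw [hre]
    rw [CachingSetting.sum_rank_eq (T cc).card (T cc) rfl]
    have hcard : (T cc).card ≤ n := by
      calc (T cc).card ≤ (Finset.range n).card := Finset.card_le_card (Finset.filter_subset _ _)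
        _ = n := Finset.card_range n
    rcases Nat.eq_zero_or_pos (T cc).card with h0 | hpos
    · rw [h0]
      have hAc0 : Ac cc = 0 := by
        have hTe : T cc = ∅ := Finset.card_eq_zero.1 h0
        show ∑ s' ∈ T cc, S.D Wstar (v s') = 0
        rw [hTe]
        simp
      rw [hAc0]
      simp only [Finset.range_zero, Finset.sum_empty]
      nlinarith
    · obtain ⟨m, hm⟩ : ∃ m, (T cc).card = m + 1 := ⟨(T cc).card - 1, by omega⟩
      rw [hm]
      set Hm := ∑ j ∈ Finset.range (m + 1), (1 : ℝ) / (j + 1) with hHm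
      have hgsum : ∑ j ∈ Finset.range (m + 1), g cc (j + 1)
          = 3 * S.f cc + 2 * B cc * (Hm - 1) := by
        rw [Finset.sum_range_succ' (fun j => g cc (j + 1)) m]
        have hg1 : g cc (0 + 1) = 3 * S.f cc := by rw [hg]; simp
        have hgj : ∀ j ∈ Finset.range m, g cc (j + 1 + 1) = 2 * B cc * (1 / ((j : ℝ) + 2)) := by
          intro j _
          rw [hg]
          simp only [if_neg (by omega : ¬ j + 1 + 1 = 1)]
          push_cast
          ring
        rw [Finset.sum_congr rfl hgj, ← Finset.mul_sum, hg1]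
        have hHm' : ∑ j ∈ Finset.range m, (1 : ℝ) / ((j : ℝ) + 2) = Hm - 1 := by
          rw [hHm, Finset.sum_range_succ' (fun j => (1 : ℝ) / (j + 1)) m]
          push_cast
          have hcongr2 : ∀ j ∈ Finset.range m, (1 : ℝ) / ((j : ℝ) + 2) = 1 / ((j : ℝ) + 1 + 1) :=
            fun j _ => by ring_nf
          rw [Finset.sum_congr rfl hcongr2]
          norm_num
        rw [hHm']
        ring
      rw [hgsum]
      have hHle : Hm ≤ L := by
        calc Hm ≤ Real.logb 2 ((m + 1 : ℕ) + 1) := CachingSetting.harm_le_logb (m + 1)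
          _ ≤ L := by
            rw [hL]
            apply Real.logb_le_logb_of_le (by norm_num) (by positivity)
            have : (m + 1 : ℕ) ≤ n := hm ▸ hcard
            have : ((m + 1 : ℕ) : ℝ) ≤ (n : ℝ) := by exact_mod_cast this
            push_cast
            push_cast at this
            linarith
      have hBeq2 : B cc = S.f cc + 2 * Ac cc := rfl
      rw [hBeq2]
      nlinarith [mul_le_mul_of_nonneg_right hHle hfnn,
        mul_le_mul_of_nonneg_right hHle (hAcnn cc),
        mul_nonneg (by linarith : (0:ℝ) ≤ L) hfnn,
        mul_nonneg (by linarith : (0:ℝ) ≤ L) (hAcnn cc), hAcnn cc, hL1]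
  -- sum the cluster bounds
  have hsumcluster : ∑ cc ∈ Wstar, ∑ s ∈ T cc, (g (c s) (rk s) + 3 * S.D Wstar (v s))
      ≤ (4 * L + 2) * ((∑ w ∈ Wstar.erase S.r, S.f w) + ∑ s ∈ Finset.range n, S.D Wstar (v s)) := by
    calc ∑ cc ∈ Wstar, ∑ s ∈ T cc, (g (c s) (rk s) + 3 * S.D Wstar (v s))
        ≤ ∑ cc ∈ Wstar, (4 * L + 2) * (S.f cc + Ac cc) := Finset.sum_le_sum hcluster
      _ = (4 * L + 2) * ((∑ cc ∈ Wstar, S.f cc) + ∑ cc ∈ Wstar, Ac cc) := by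
          rw [← Finset.mul_sum, Finset.sum_add_distrib]
      _ = (4 * L + 2) * ((∑ w ∈ Wstar.erase S.r, S.f w) + ∑ s ∈ Finset.range n, S.D Wstar (v s)) := by
          congr 2
          · rw [← Finset.sum_erase_add Wstar _ hr, S.f_root, add_zero]
          · rw [hAc]
            exact Finset.sum_fiberwise_of_maps_to (fun s _ => hcmem s) _
  linarith [hmain, hfiber ▸ hsumcluster]
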